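/- Let Q' be the 2×2 real symmetric matrix with entries Q'₁₁ = ‖g_θ‖² sin²Ω, Q'₂₂ = ‖g_r‖² sin²Θ, and Q'₁₂ = Q'₂₁ = Re(gᴴ W g)/‖g‖², where g, g_θ, g_r ∈ ℂ^K with g ≠ 0, W = (g_θᴴ g_r) I - g_θ g_rᴴ, sin²Ω = 1 - |g_θᴴ g|²/(‖g_θ‖²‖g‖²), and sin²Θ = 1 - |g_rᴴ g|²/(‖g_r‖²‖g‖²). In the special case g_r = λ g_θ for some λ ∈ ℝ (proportional derivative vectors), det Q' = 0. -/

import Mathlib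

theorem det_Q_zero_of_proportional (K : ℕ) (g gθ gr : EuclideanSpace ℂ (Fin K))
    (hg : g ≠ 0) (hgθ : gθ ≠ 0) (hgr : gr ≠ 0)
    (lam : ℝ) (hprop : gr = (lam : ℂ) • gθ) :
    Matrix.det
        !![‖gθ‖ ^ 2 * (1 - ‖(inner ℂ gθ g : ℂ)‖ ^ 2 / (‖gθ‖ ^ 2 * ‖g‖ ^ 2)),
            ((inner ℂ gθ gr : ℂ) * (‖g‖ ^ 2 : ℂ)
              - (inner ℂ g gθ : ℂ) * (inner ℂ gr g : ℂ)).re / ‖g‖ ^ 2;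
          ((inner ℂ gθ gr : ℂ) * (‖g‖ ^ 2 : ℂ)
              - (inner ℂ g gθ : ℂ) * (inner ℂ gr g : ℂ)).re / ‖g‖ ^ 2,
            ‖gr‖ ^ 2 * (1 - ‖(inner ℂ gr g : ℂ)‖ ^ 2 / (‖gr‖ ^ 2 * ‖g‖ ^ 2))]
      = 0 := by
  have hlam : lam ≠ 0 := by
    rintro rfl; simp at hprop; exact hgr hprop
  subst hprop
  have hG : ‖g‖ ≠ 0 := norm_ne_zero_iff.mpr hg
  have hGθ : ‖gθ‖ ≠ 0 := norm_ne_zero_iff.mpr hgθ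
  have h1 : (inner ℂ gθ ((lam : ℂ) • gθ) : ℂ) = (lam : ℂ) * (‖gθ‖ : ℂ) ^ 2 := by
    rw [inner_smul_right, inner_self_eq_norm_sq_to_K]; rfl
  have h2 : (inner ℂ ((lam : ℂ) • gθ) g : ℂ) = (lam : ℂ) * (inner ℂ gθ g : ℂ) := by
    rw [inner_smul_left]; simp
  have h3 : ‖(lam : ℂ) • gθ‖ = |lam| * ‖gθ‖ := by
    rw [norm_smul]; simp
  have h4 : (inner ℂ g gθ : ℂ) * (inner ℂ gθ g : ℂ) =
      ((‖(inner ℂ gθ g : ℂ)‖ ^ 2 : ℝ) : ℂ) := by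
    rw [← inner_conj_symm g gθ, Complex.conj_mul']; norm_cast
  rw [Matrix.det_fin_two_of, h1, h2, h3]
  have hre : ((lam : ℂ) * (‖gθ‖ : ℂ) ^ 2 * ((‖g‖ : ℂ) ^ 2)
      - (inner ℂ g gθ : ℂ) * ((lam : ℂ) * (inner ℂ gθ g : ℂ))).re
      = lam * (‖gθ‖ ^ 2 * ‖g‖ ^ 2 - ‖(inner ℂ gθ g : ℂ)‖ ^ 2) := by
    have e : (lam : ℂ) * (‖gθ‖ : ℂ) ^ 2 * ((‖g‖ : ℂ) ^ 2)
        - (inner ℂ g gθ : ℂ) * ((lam : ℂ) * (inner ℂ gθ g : ℂ))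
        = ((lam * (‖gθ‖ ^ 2 * ‖g‖ ^ 2 - ‖(inner ℂ gθ g : ℂ)‖ ^ 2) : ℝ) : ℂ) := by
      push_cast at h4 ⊢; linear_combination (-(lam : ℂ)) * h4
    rw [e, Complex.ofReal_re]
  rw [hre]
  have h5 : ‖(lam : ℂ) * (inner ℂ gθ g : ℂ)‖ = |lam| * ‖(inner ℂ gθ g : ℂ)‖ := by
    rw [norm_mul, Complex.norm_real, Real.norm_eq_abs]
  rw [h5]
  have h6 : |lam| ^ 2 = lam ^ 2 := sq_abs lam
  set a := ‖(inner ℂ gθ g : ℂ)‖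
  rw [mul_pow, mul_pow, h6]
  field_simp
  ring
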